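/- arXiv:1909.09949 — 2 statements merged into one kernel-verified Lean document; each statement's English description precedes it below -/
import Mathlib

section
/- For all n, k ≥ 0, the number of 0-1 matrices of size n × k that contain neither (1 1 / 1 0) nor (1 1 / 1 1) as a 2×2 submatrix (i.e., Γ-free matrices) equals ∑_{m=0}^{min(n,k)} m! · S(n+1, m+1) · m! · S(k+1, m+1). -/
set_option maxRecDepth 10000


open Finset

attribute [local instance] Classical.propDecidable

/-- A 0-1 matrix (with Boolean entries) is Γ-free if there are no rows `i1 < i2` and
columns `j1 < j2` with ones in positions `(i1,j1)`, `(i1,j2)`, `(i2,j1)`; this forbids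
both `(1 1 / 1 0)` and `(1 1 / 1 1)` as 2×2 submatrices. -/
def IsGammaFree {n k : ℕ} (M : Fin n → Fin k → Bool) : Prop :=
  ∀ i1 i2 : Fin n, ∀ j1 j2 : Fin k, i1 < i2 → j1 < j2 →
    ¬(M i1 j1 = true ∧ M i1 j2 = true ∧ M i2 j1 = true)

/-- The Stirling numbers of the second kind. -/
def stirling : ℕ → ℕ → ℕ
  | 0, 0 => 1
  | 0, _ + 1 => 0
  | _ + 1, 0 => 0
  | n + 1, k + 1 => stirling n k + (k + 1) * stirling n (k + 1)

lemma stirling_succ (n k : ℕ) :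
    stirling (n+1) (k+1) = stirling n k + (k+1) * stirling n (k+1) := rfl

lemma stirling_zero (n : ℕ) : stirling (n+1) 0 = 0 := rfl

lemma stirling_eq_zero : ∀ {n m : ℕ}, n < m → stirling n m = 0 := by
  intro n
  induction n with
  | zero => intro m h; cases m with
    | zero => omega
    | succ m => rfl
  | succ n ih =>
    intro m h
    cases m with
    | zero => omega
    | succ m => rw [stirling_succ, ih (by omega), ih (by omega)]; ring

lemma stirling_one (n : ℕ) : stirling (n+1) 1 = 1 := by
  induction n with
  | zero => rfl
  | succ n ih =>
    show stirling (n+1) 0 + 1 * stirling (n+1) 1 = 1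
    rw [stirling_zero, ih]

lemma key (k : ℕ) : ∀ m : ℕ,
    ∑ j ∈ range k, k.choose j * stirling (j + 2) (m + 1)
      = (m+1)^2 * stirling (k+1) (m+2) + m * stirling (k+1) (m+1) := by
  induction k with
  | zero =>
    intro m
    simp [stirling_eq_zero (show 1 < m+2 by omega)]
    cases m with
    | zero => simp
    | succ m => simp [stirling_eq_zero (show 1 < m+2 by omega)]
  | succ k ih =>
    intro m
    rw [Finset.sum_range_succ']
    have hsplit : ∀ j ∈ range k, (k+1).choose (j+1) * stirling (j+1+2) (m+1)
        = (k.choose j * stirling (j+2) m + (m+1)*(k.choose j * stirling (j+2) (m+1)))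
          + k.choose (j+1) * stirling (j+1+2) (m+1) := by
      intro j _
      rw [Nat.choose_succ_succ, show j+1+2 = (j+2)+1 from rfl, stirling_succ]
      ring
    rw [Finset.sum_congr rfl hsplit, Finset.sum_add_distrib, Finset.sum_add_distrib,
      ← Finset.mul_sum]
    have hB : (∑ j ∈ range k, k.choose (j+1) * stirling (j+1+2) (m+1)) + stirling 2 (m+1)
        = (∑ j ∈ range k, k.choose j * stirling (j+2) (m+1)) + stirling (k+2) (m+1) := by
      have h1 := Finset.sum_range_succ' (fun j => k.choose j * stirling (j+2) (m+1)) k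
      have h2 := Finset.sum_range_succ (fun j => k.choose j * stirling (j+2) (m+1)) k
      norm_num at h1 h2
      omega
    rw [ih m]
    cases m with
    | zero =>
      simp only [show ∀ j, stirling (j+2) 0 = 0 from fun j => rfl, mul_zero, Finset.sum_const_zero]
      have e1 : stirling (k+2) 2 = stirling (k+1) 1 + 2 * stirling (k+1) 2 := stirling_succ (k+1) 1
      have e2 : stirling (k+1) 1 = 1 := stirling_one k
      have e3 : stirling (k+2) 1 = 1 := stirling_one (k+1)
      have := hB
      have hI := ih 0
      have e4 : stirling 2 1 = 1 := rfl
      simp only [show (0:ℕ)+1 = 1 from rfl, show (0:ℕ)+2 = 2 from rfl,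
        show ∀ a:ℕ, a+1+1 = a+2 from fun a => rfl, Nat.choose_zero_right, one_mul,
        pow_two] at this hI e1 e2 e3 e4 ⊢
      omega
    | succ m =>
      rw [ih m]
      have e1 : stirling (k+2) (m+3) = stirling (k+1) (m+2) + (m+3) * stirling (k+1) (m+3) :=
        stirling_succ (k+1) (m+2)
      have e2 : stirling (k+2) (m+2) = stirling (k+1) (m+1) + (m+2) * stirling (k+1) (m+2) :=
        stirling_succ (k+1) (m+1)
      -- combine with hB and ring reasoning
      have hI := ih (m+1)
      rw [Nat.choose_zero_right, one_mul]
      have hB' := hB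
      zify at e1 e2 hB' hI ⊢
      ring_nf at e1 e2 hB' hI ⊢
      linear_combination hB' + hI - ((m:ℤ)+2)^2*e1 - (m:ℤ)*e2

lemma T_succ (n k : ℕ) :
    ∑ m ∈ range (n+2), m.factorial * stirling (n+2) (m+1) * m.factorial * stirling (k+1) (m+1)
      = (∑ m ∈ range (n+1), m.factorial * stirling (n+1) (m+1) * m.factorial * stirling (k+1) (m+1))
        + ∑ j ∈ range k, k.choose j *
            (∑ m ∈ range (n+1), m.factorial * stirling (n+1) (m+1) * m.factorial * stirling (j+2) (m+1)) := by
  have hL : ∑ m ∈ range (n+2), m.factorial * stirling (n+2) (m+1) * m.factorial * stirling (k+1) (m+1)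
      = ∑ m ∈ range (n+1), m.factorial * stirling (n+1) (m+1) * m.factorial *
          ((m+1)^2 * stirling (k+1) (m+2) + (m+1) * stirling (k+1) (m+1)) := by
    have e : ∀ m ∈ range (n+2),
        m.factorial * stirling (n+2) (m+1) * m.factorial * stirling (k+1) (m+1)
          = m.factorial * stirling (n+1) m * m.factorial * stirling (k+1) (m+1)
            + (m+1) * (m.factorial * stirling (n+1) (m+1) * m.factorial * stirling (k+1) (m+1)) := by
      intro m _
      rw [show n+2 = (n+1)+1 from rfl, stirling_succ]
      cases m with
      | zero => simp [stirling_zero]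
      | succ m => rw [stirling_succ]; ring
    rw [Finset.sum_congr rfl e, Finset.sum_add_distrib,
      Finset.sum_range_succ' (fun m => m.factorial * stirling (n+1) m * m.factorial * stirling (k+1) (m+1)) (n+1),
      Finset.sum_range_succ (fun m => (m+1) * (m.factorial * stirling (n+1) (m+1) * m.factorial * stirling (k+1) (m+1))) (n+1)]
    rw [show stirling (n+1) 0 = 0 from rfl, stirling_eq_zero (show n+1 < n+2 by omega)]
    simp only [mul_zero, zero_mul, add_zero, Nat.factorial_zero]
    rw [← Finset.sum_add_distrib]
    refine Finset.sum_congr rfl fun m _ => ?_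
    rw [Nat.factorial_succ]
    ring
  have hR : ∑ j ∈ range k, k.choose j *
        (∑ m ∈ range (n+1), m.factorial * stirling (n+1) (m+1) * m.factorial * stirling (j+2) (m+1))
      = ∑ m ∈ range (n+1), m.factorial * stirling (n+1) (m+1) * m.factorial *
          ((m+1)^2 * stirling (k+1) (m+2) + m * stirling (k+1) (m+1)) := by
    simp only [Finset.mul_sum]
    rw [Finset.sum_comm]
    refine Finset.sum_congr rfl fun m _ => ?_
    have e2 : ∀ j ∈ range k,
        k.choose j * (m.factorial * stirling (n+1) (m+1) * m.factorial * stirling (j+2) (m+1))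
          = (m.factorial * stirling (n+1) (m+1) * m.factorial) * (k.choose j * stirling (j+2) (m+1)) :=
      fun j _ => by ring
    rw [Finset.sum_congr rfl e2, ← Finset.mul_sum, key k m]
  rw [hL, hR]
  rw [← Finset.sum_add_distrib]
  refine Finset.sum_congr rfl fun m _ => ?_
  ring

noncomputable def gf (n k : ℕ) : ℕ :=
  (Finset.univ.filter (fun M : Fin n → Fin k → Bool => IsGammaFree M)).card

lemma gf_zero (k : ℕ) : gf 0 k = 1 := by
  rw [gf]
  rw [Finset.filter_true_of_mem (fun M _ => by intro i1; exact fun i2 _ _ _ _ => i1.elim0)]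
  simp [Finset.card_univ]

lemma card_restrict (n k : ℕ) (Fr : Finset (Fin k)) :
    (Finset.univ.filter (fun N : Fin n → Fin k → Bool =>
       IsGammaFree N ∧ ∀ i j, j ∉ Fr → N i j = false)).card = gf n Fr.card := by
  rw [gf]
  set e := Fr.orderIsoOfFin rfl with he
  apply Finset.card_nbij'
    (i := fun N => fun r a => N r ((e a : Fin k)))
    (j := fun N' => fun r (c : Fin k) => if h : c ∈ Fr then N' r (e.symm ⟨c, h⟩) else false)
  · -- maps to
    intro N hN
    simp only [Finset.mem_coe, Finset.mem_filter, Finset.mem_univ, true_and] at hN ⊢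
    intro i1 i2 a1 a2 hi ha
    exact hN.1 i1 i2 (e a1 : Fin k) (e a2 : Fin k) hi (by exact_mod_cast e.lt_iff_lt.mpr ha)
  · -- maps from
    intro N' hN'
    simp only [Finset.mem_coe, Finset.mem_filter, Finset.mem_univ, true_and] at hN' ⊢
    constructor
    · intro i1 i2 c1 c2 hi hc H
      rcases H with ⟨H1, H2, H3⟩
      simp only [] at H1 H2 H3
      by_cases h1 : c1 ∈ Fr
      · by_cases h2 : c2 ∈ Fr
        · rw [dif_pos h1] at H1 H3
          rw [dif_pos h2] at H2
          exact hN' i1 i2 (e.symm ⟨c1, h1⟩) (e.symm ⟨c2, h2⟩) hi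
            (e.symm.lt_iff_lt.mpr (by exact_mod_cast hc)) ⟨H1, H2, H3⟩
        · rw [dif_neg h2] at H2; exact absurd H2 (by simp)
      · rw [dif_neg h1] at H1; exact absurd H1 (by simp)
    · intro i c hc
      rw [dif_neg hc]
  · -- left inverse
    intro N hN
    simp only [Finset.mem_coe, Finset.mem_filter, Finset.mem_univ, true_and] at hN
    funext r c
    by_cases h : c ∈ Fr
    · simp only [dif_pos h]
      congr 1
      exact congrArg Subtype.val (e.apply_symm_apply ⟨c, h⟩)
    · simp only [dif_neg h]
      exact (hN.2 r c h).symm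
  · -- right inverse
    intro N' hN'
    funext r a
    have hmem : (e a : Fin k) ∈ Fr := (e a).2
    simp only [dif_pos hmem]
    congr 1
    rw [show (⟨(e a : Fin k), hmem⟩ : {x // x ∈ Fr}) = e a from rfl, e.symm_apply_apply]

lemma fiber_empty (n k : ℕ) :
    (Finset.univ.filter (fun M : Fin (n+1) → Fin k → Bool =>
       IsGammaFree M ∧ ∀ j, (M 0 j = true ↔ j ∈ (∅ : Finset (Fin k))))).card = gf n k := by
  rw [gf]
  apply Finset.card_nbij' (i := fun M => fun r j => M r.succ j)
    (j := fun N => fun r j => Fin.cases false (fun r' => N r' j) r)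
  · intro M hM
    simp only [Finset.mem_coe, mem_filter, mem_univ, true_and] at hM ⊢
    intro i1 i2 j1 j2 hi hj
    exact hM.1 i1.succ i2.succ j1 j2 (by simpa [Fin.succ_lt_succ_iff] using hi) hj
  · intro N hN
    simp only [Finset.mem_coe, mem_filter, mem_univ, true_and, Finset.notMem_empty, iff_false] at hN ⊢
    refine ⟨?_, fun j => by simp⟩
    intro i1 i2 j1 j2 hi hj H
    rcases H with ⟨H1, H2, H3⟩
    simp only [] at H1 H2 H3
    rcases Fin.eq_zero_or_eq_succ i1 with h1 | ⟨r1, rfl⟩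
    · subst h1; simp at H1
    · rcases Fin.eq_zero_or_eq_succ i2 with h2 | ⟨r2, rfl⟩
      · subst h2; exact absurd hi (by simp [Fin.lt_iff_val_lt_val])
      · simp only [Fin.cases_succ] at H1 H2 H3
        exact hN r1 r2 j1 j2 (by rwa [Fin.succ_lt_succ_iff] at hi) hj ⟨H1, H2, H3⟩
  · intro M hM
    simp only [Finset.mem_coe, mem_filter, mem_univ, true_and, Finset.notMem_empty, iff_false,
      Bool.not_eq_true] at hM
    funext r j
    rcases Fin.eq_zero_or_eq_succ r with h | ⟨r', rfl⟩
    · subst h; simp [hM.2 j]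
    · simp [Fin.cases_succ]
  · intro N hN
    funext r j
    simp [Fin.cases_succ]

lemma fiber_nonempty (n k : ℕ) (S : Finset (Fin k)) (hS : S.Nonempty) :
    (Finset.univ.filter (fun M : Fin (n+1) → Fin k → Bool =>
       IsGammaFree M ∧ ∀ j, (M 0 j = true ↔ j ∈ S))).card = gf n (k - S.card + 1) := by
  have hmax : S.max' hS ∈ S := S.max'_mem hS
  have hcard : (insert (S.max' hS) (Finset.univ \ S)).card = k - S.card + 1 := by
    rw [Finset.card_insert_of_notMem (by simp [hmax]),
      Finset.card_sdiff_of_subset (Finset.subset_univ S), Finset.card_univ, Fintype.card_fin]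
  rw [← hcard, ← card_restrict n k (insert (S.max' hS) (Finset.univ \ S))]
  set Fr := insert (S.max' hS) (Finset.univ \ S) with hFr
  have hmemFr : ∀ j : Fin k, j ∉ Fr → j ∈ S ∧ j ≠ S.max' hS := by
    intro j hj
    rw [hFr] at hj
    simp only [Finset.mem_insert, Finset.mem_sdiff, Finset.mem_univ, true_and, not_or,
      not_not] at hj
    exact ⟨hj.2, hj.1⟩
  have hFrS : ∀ j : Fin k, j ∈ Fr → j ∈ S → j = S.max' hS := by
    intro j hj hjS
    rw [hFr] at hj
    simp only [Finset.mem_insert, Finset.mem_sdiff, Finset.mem_univ, true_and] at hj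
    rcases hj with h | h
    · exact h
    · exact absurd hjS h
  apply Finset.card_nbij' (i := fun M => fun r j => M r.succ j)
    (j := fun N => fun r j => Fin.cases (decide (j ∈ S)) (fun r' => N r' j) r)
  · intro M hM
    simp only [Finset.mem_coe, mem_filter, mem_univ, true_and] at hM ⊢
    obtain ⟨hGF, hsup⟩ := hM
    constructor
    · intro i1 i2 j1 j2 hi hj
      exact hGF i1.succ i2.succ j1 j2 (by simpa [Fin.succ_lt_succ_iff] using hi) hj
    · intro i j hj
      obtain ⟨hjS, hjne⟩ := hmemFr j hj
      have hjlt : j < S.max' hS := lt_of_le_of_ne (S.le_max' j hjS) hjne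
      have := hGF 0 i.succ j (S.max' hS) (Fin.succ_pos i) hjlt
      simp only [(hsup j).mpr hjS, (hsup (S.max' hS)).mpr hmax, true_and] at this
      exact Bool.not_eq_true _ ▸ this
  · intro N hN
    simp only [Finset.mem_coe, mem_filter, mem_univ, true_and] at hN ⊢
    obtain ⟨hGF, hzero⟩ := hN
    constructor
    · intro i1 i2 j1 j2 hi hj H
      rcases H with ⟨H1, H2, H3⟩
      simp only [] at H1 H2 H3
      rcases Fin.eq_zero_or_eq_succ i1 with h1 | ⟨r1, rfl⟩
      · subst h1
        simp only [Fin.cases_zero, decide_eq_true_iff] at H1 H2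
        rcases Fin.eq_zero_or_eq_succ i2 with h2 | ⟨r2, rfl⟩
        · subst h2; exact absurd hi (by simp [Fin.lt_iff_val_lt_val])
        · simp only [Fin.cases_succ] at H3
          have hj1Fr : j1 ∈ Fr := by
            by_contra hc
            rw [hzero r2 j1 hc] at H3
            exact Bool.false_ne_true H3
          have : j1 = S.max' hS := hFrS j1 hj1Fr H1
          have : j2 ≤ j1 := this ▸ S.le_max' j2 H2
          exact absurd hj (not_lt.mpr this)
      · rcases Fin.eq_zero_or_eq_succ i2 with h2 | ⟨r2, rfl⟩
        · subst h2; exact absurd hi (by simp [Fin.lt_iff_val_lt_val])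
        · simp only [Fin.cases_succ] at H1 H2 H3
          exact hGF r1 r2 j1 j2 (by rwa [Fin.succ_lt_succ_iff] at hi) hj ⟨H1, H2, H3⟩
    · intro j
      simp [decide_eq_true_iff]
  · intro M hM
    simp only [Finset.mem_coe, mem_filter, mem_univ, true_and] at hM
    funext r j
    rcases Fin.eq_zero_or_eq_succ r with h | ⟨r', rfl⟩
    · subst h
      simp only [Fin.cases_zero]
      have := hM.2 j
      cases hMj : M 0 j with
      | false => rw [hMj] at this; simp only [Bool.false_eq_true, false_iff] at this
                 simp [this]
      | true => rw [hMj] at this; simp only [true_iff] at this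
                simp [this]
    · simp [Fin.cases_succ]
  · intro N hN
    funext r j
    simp [Fin.cases_succ]

lemma gf_succ (n k : ℕ) :
    gf (n+1) k = gf n k + ∑ j ∈ range k, k.choose j * gf n (j+1) := by
  have h1 : gf (n+1) k = ∑ S ∈ (univ : Finset (Finset (Fin k))),
      (univ.filter (fun M : Fin (n+1) → Fin k → Bool =>
        IsGammaFree M ∧ ∀ j, (M 0 j = true ↔ j ∈ S))).card := by
    rw [gf, Finset.card_eq_sum_card_fiberwise
      (f := fun M : Fin (n+1) → Fin k → Bool => univ.filter (fun j => M 0 j = true))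
      (t := (univ : Finset (Finset (Fin k)))) (fun M _ => Finset.mem_univ _)]
    refine Finset.sum_congr rfl fun S _ => ?_
    rw [Finset.filter_filter]
    congr 1
    apply Finset.filter_congr
    intro M _
    constructor
    · rintro ⟨hGF, hsup⟩
      exact ⟨hGF, fun j => by rw [← hsup]; simp⟩
    · rintro ⟨hGF, hsup⟩
      exact ⟨hGF, by ext j; simp [hsup j]⟩
  rw [h1]
  have h2 : ∀ S ∈ (univ : Finset (Finset (Fin k))),
      (univ.filter (fun M : Fin (n+1) → Fin k → Bool =>
        IsGammaFree M ∧ ∀ j, (M 0 j = true ↔ j ∈ S))).card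
        = if S = ∅ then gf n k else gf n (k - S.card + 1) := by
    intro S _
    by_cases h : S = ∅
    · subst h; rw [if_pos rfl]; exact fiber_empty n k
    · rw [if_neg h]; exact fiber_nonempty n k S (Finset.nonempty_iff_ne_empty.mpr h)
  rw [Finset.sum_congr rfl h2]
  rw [show (univ : Finset (Finset (Fin k))) = (univ : Finset (Fin k)).powerset from
    (Finset.powerset_univ).symm]
  rw [Finset.sum_powerset]
  rw [Finset.card_univ, Fintype.card_fin]
  rw [Finset.sum_range_succ']
  have h3 : ∑ t ∈ Finset.powersetCard 0 (univ : Finset (Fin k)),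
      (if t = ∅ then gf n k else gf n (k - t.card + 1)) = gf n k := by
    rw [Finset.powersetCard_zero]
    simp
  rw [h3]
  have h4 : ∀ j ∈ range k, ∑ t ∈ Finset.powersetCard (j+1) (univ : Finset (Fin k)),
      (if t = ∅ then gf n k else gf n (k - t.card + 1)) = k.choose (j+1) * gf n (k - j) := by
    clear h1 h2 h3
    intro j hj
    rw [Finset.mem_range] at hj
    have he : ∀ t ∈ Finset.powersetCard (j+1) (univ : Finset (Fin k)),
        (if t = ∅ then gf n k else gf n (k - t.card + 1)) = gf n (k - j) := by
      intro t ht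
      rw [Finset.mem_powersetCard] at ht
      have hcd : t.card = j + 1 := ht.2
      have hne : t ≠ ∅ := by
        intro hc
        rw [hc, Finset.card_empty] at hcd
        omega
      rw [if_neg hne, hcd, show k - (j+1) + 1 = k - j by omega]
    rw [Finset.sum_congr rfl he, Finset.sum_const, Finset.card_powersetCard,
      Finset.card_univ, Fintype.card_fin, smul_eq_mul]
  rw [Finset.sum_congr rfl h4, add_comm]
  clear h1 h2 h3 h4
  congr 1
  rw [← Finset.sum_range_reflect]
  refine Finset.sum_congr rfl fun j hj => ?_
  rw [Finset.mem_range] at hj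
  rw [show k - 1 - j + 1 = k - j by omega, show k - (k - 1 - j) = j + 1 by omega,
    Nat.choose_symm (le_of_lt hj)]

lemma gf_eq (n : ℕ) : ∀ k, gf n k = ∑ m ∈ range (n+1),
    m.factorial * stirling (n+1) (m+1) * m.factorial * stirling (k+1) (m+1) := by
  induction n with
  | zero =>
    intro k
    rw [gf_zero]
    rw [Finset.sum_range_one]
    simp [show stirling 1 1 = 1 from rfl, stirling_one k]
  | succ n ih =>
    intro k
    rw [gf_succ]
    rw [show n+1+1 = n+2 from rfl, T_succ n k]
    congr 1
    · exact ih k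
    · refine Finset.sum_congr rfl fun j _ => ?_
      rw [ih (j+1), show j+1+1 = j+2 from rfl]

/-- The number of Γ-free 0-1 matrices of size `n × k` equals
`∑_{m=0}^{min(n,k)} m! S(n+1, m+1) m! S(k+1, m+1)`. -/
theorem card_gammaFree_eq (n k : ℕ) :
    (Finset.univ.filter (fun M : Fin n → Fin k → Bool => IsGammaFree M)).card
      = ∑ m ∈ Finset.range (min n k + 1),
          m.factorial * stirling (n + 1) (m + 1) * m.factorial * stirling (k + 1) (m + 1) := by
  have h := gf_eq n k
  rw [gf] at h
  rw [h]
  symm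
  apply Finset.sum_subset
  · apply Finset.range_subset_range.mpr
    omega
  · intro m hm hnot
    rw [Finset.mem_range] at hm
    rw [Finset.mem_range] at hnot
    have hk : k + 1 < m + 1 := by omega
    rw [stirling_eq_zero hk, mul_zero]
end

section
/- Define, for n ≥ 0 and k ≥ 0, the poly-Bernoulli numbers with q-parameter B_{n,q}^{(-k)} := ∑_{m=0}^{n} S(n, m) · (−q)^{n−m} · m! · (m+1)^k. Then for all n ≥ 1 and k ≥ 0, B_{n,q}^{(-(k+1))} = (n+1) · B_{n,q}^{(-k)} + ∑_{i=1}^{n−1} q^i · C(n, i+1) · B_{n−i,q}^{(-k)}, where C(n, j) is the binomial coefficient. -/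
open Finset Polynomial

/-- The poly-Bernoulli numbers with a q-parameter (negative upper index `-k`):
`B_{n,q}^{(-k)} = ∑_{m=0}^n S(n,m) (-q)^{n-m} m! (m+1)^k`, as polynomials in `q`. -/
noncomputable def polyBernoulliQ (n k : ℕ) : Polynomial ℚ :=
  ∑ m ∈ Finset.range (n + 1),
    (stirling n m : Polynomial ℚ) * (-Polynomial.X) ^ (n - m) *
      (m.factorial : Polynomial ℚ) * ((m : Polynomial ℚ) + 1) ^ k

lemma stirling_succ_succ (n k : ℕ) :
    stirling (n + 1) (k + 1) = stirling n k + (k + 1) * stirling n (k + 1) := rfl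

lemma stirling_succ_zero (n : ℕ) : stirling (n + 1) 0 = 0 := rfl

lemma stirling_eq_zero_of_lt : ∀ n m : ℕ, n < m → stirling n m = 0 := by
  intro n
  induction n with
  | zero => intro m h; cases m with
    | zero => omega
    | succ m => rfl
  | succ n ih =>
    intro m h
    cases m with
    | zero => omega
    | succ m =>
      rw [stirling_succ_succ, ih m (by omega), ih (m + 1) (by omega)]
      ring

/-- Auxiliary alternating sum. -/
def Fq (n m : ℕ) : ℚ :=
  ∑ j ∈ Finset.range (n + 1), (-1 : ℚ) ^ j * (n.choose j) * stirling (n + 1 - j) m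

lemma Fq_zero (n : ℕ) : Fq n 0 = 0 := by
  unfold Fq
  apply Finset.sum_eq_zero
  intro j hj
  rw [Finset.mem_range] at hj
  rw [show n + 1 - j = (n - j) + 1 by omega, stirling_succ_zero]
  simp

lemma Fq_rec (n m : ℕ) : Fq (n + 1) (m + 1) = m * Fq n (m + 1) + Fq n m := by
  have key : ∀ m' : ℕ,
      ∑ j ∈ Finset.range (n + 1), (-1 : ℚ) ^ (j + 1) * (n.choose (j + 1)) * stirling (n - j) m'
        = Fq n m' - stirling n.succ m' := by
    intro m'
    have h1 : Fq n m' = (∑ j ∈ Finset.range n,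
        (-1 : ℚ) ^ (j + 1) * (n.choose (j + 1)) * stirling (n + 1 - (j + 1)) m')
        + (-1 : ℚ) ^ 0 * (n.choose 0) * stirling (n + 1 - 0) m' := by
      unfold Fq
      rw [Finset.sum_range_succ']
    rw [Finset.sum_range_succ]
    have h2 : ∀ j ∈ Finset.range n,
        (-1 : ℚ) ^ (j + 1) * (n.choose (j + 1)) * stirling (n - j) m'
          = (-1 : ℚ) ^ (j + 1) * (n.choose (j + 1)) * stirling (n + 1 - (j + 1)) m' := by
      intro j hj
      rw [Finset.mem_range] at hj
      rw [show n + 1 - (j + 1) = n - j by omega]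
    rw [Finset.sum_congr rfl h2, Nat.choose_succ_self]
    rw [h1]
    simp
  have hL : Fq (n + 1) (m + 1) = (∑ j ∈ Finset.range (n + 1),
      (-1 : ℚ) ^ (j + 1) * ((n + 1).choose (j + 1)) * stirling (n + 1 + 1 - (j + 1)) (m + 1))
      + (-1 : ℚ) ^ 0 * ((n + 1).choose 0) * stirling (n + 1 + 1 - 0) (m + 1) := by
    unfold Fq
    rw [Finset.sum_range_succ']
  rw [hL]
  have h3 : ∀ j ∈ Finset.range (n + 1),
      (-1 : ℚ) ^ (j + 1) * ((n + 1).choose (j + 1)) * stirling (n + 1 + 1 - (j + 1)) (m + 1)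
        = -((-1 : ℚ) ^ j * (n.choose j) * stirling (n + 1 - j) (m + 1))
          + ((-1 : ℚ) ^ (j + 1) * (n.choose (j + 1)) * stirling (n - j) m
            + (m + 1) * ((-1 : ℚ) ^ (j + 1) * (n.choose (j + 1)) * stirling (n - j) (m + 1))) := by
    intro j hj
    rw [Finset.mem_range] at hj
    rw [show n + 1 + 1 - (j + 1) = (n - j) + 1 by omega,
        show n + 1 - j = (n - j) + 1 by omega,
        stirling_succ_succ, Nat.choose_succ_succ]
    push_cast
    ring
  rw [Finset.sum_congr rfl h3, Finset.sum_add_distrib, Finset.sum_add_distrib,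
      Finset.sum_neg_distrib, ← Finset.mul_sum, key m, key (m + 1)]
  have h4 : (∑ j ∈ Finset.range (n + 1),
      (-1 : ℚ) ^ j * (n.choose j) * stirling (n + 1 - j) (m + 1)) = Fq n (m + 1) := rfl
  rw [h4]
  have h5 : stirling (n + 1 + 1) (m + 1) = stirling (n + 1) m + (m + 1) * stirling (n + 1) (m + 1) :=
    stirling_succ_succ _ _
  simp only [Nat.choose_zero_right, pow_zero, Nat.sub_zero, h5, Nat.succ_eq_add_one]
  push_cast
  ring

lemma Fq_succ (n m : ℕ) : Fq n (m + 1) = stirling n m := by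
  induction n generalizing m with
  | zero =>
    unfold Fq
    cases m <;> simp [stirling]
  | succ n ih =>
    rw [Fq_rec]
    cases m with
    | zero =>
      rw [ih 0, Fq_zero]
      simp [stirling]
    | succ m =>
      rw [ih (m + 1), ih m, stirling_succ_succ]
      push_cast
      ring

lemma key_identity (n m : ℕ) (hn : 1 ≤ n) :
    ∑ i ∈ Finset.Icc 1 (n - 1), (-1 : ℚ) ^ i * (n.choose (i + 1)) * stirling (n - i) m
      = ((m : ℚ) - n) * stirling n m := by
  obtain ⟨p, rfl⟩ : ∃ p, n = p + 1 := ⟨n - 1, by omega⟩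
  simp only [Nat.add_sub_cancel]
  have hIcc : Finset.Icc 1 p = Finset.Ico 1 (p + 1) := (Finset.Ico_add_one_right_eq_Icc 1 p).symm
  have hL : ∑ i ∈ Finset.Icc 1 p,
        (-1 : ℚ) ^ i * ((p + 1).choose (i + 1)) * stirling (p + 1 - i) m
      = ∑ j ∈ Finset.range p,
        (-1 : ℚ) ^ (1 + j) * ((p + 1).choose (1 + j + 1)) * stirling (p + 1 - (1 + j)) m := by
    rw [hIcc, Finset.sum_Ico_eq_sum_range]
    simp
  have hF : Fq (p + 1) m = ((∑ j ∈ Finset.range p,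
        (-1 : ℚ) ^ (j + 1 + 1) * ((p + 1).choose (j + 1 + 1)) * stirling (p + 1 + 1 - (j + 1 + 1)) m)
      + (-1 : ℚ) ^ (0 + 1) * ((p + 1).choose (0 + 1)) * stirling (p + 1 + 1 - (0 + 1)) m)
      + (-1 : ℚ) ^ 0 * ((p + 1).choose 0) * stirling (p + 1 + 1 - 0) m := by
    unfold Fq
    rw [Finset.sum_range_succ', Finset.sum_range_succ']
  have hT : ∑ j ∈ Finset.range p,
        (-1 : ℚ) ^ (1 + j) * ((p + 1).choose (1 + j + 1)) * stirling (p + 1 - (1 + j)) m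
      = -∑ j ∈ Finset.range p,
        (-1 : ℚ) ^ (j + 1 + 1) * ((p + 1).choose (j + 1 + 1)) * stirling (p + 1 + 1 - (j + 1 + 1)) m := by
    rw [← Finset.sum_neg_distrib]
    apply Finset.sum_congr rfl
    intro j hj
    rw [Finset.mem_range] at hj
    rw [show 1 + j + 1 = j + 1 + 1 by omega, show p + 1 - (1 + j) = p + 1 + 1 - (j + 1 + 1) by omega,
        show 1 + j = j + 1 by omega]
    ring
  rw [hL, hT]
  have hE : (∑ j ∈ Finset.range p,
        (-1 : ℚ) ^ (j + 1 + 1) * ((p + 1).choose (j + 1 + 1)) * stirling (p + 1 + 1 - (j + 1 + 1)) m)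
      = Fq (p + 1) m - (-1 : ℚ) ^ (0 + 1) * ((p + 1).choose (0 + 1)) * stirling (p + 1 + 1 - (0 + 1)) m
        - (-1 : ℚ) ^ 0 * ((p + 1).choose 0) * stirling (p + 1 + 1 - 0) m := by
    rw [hF]; ring
  rw [hE]
  simp only [Nat.choose_one_right, Nat.choose_zero_right, pow_one, pow_zero, zero_add,
    Nat.add_sub_cancel, Nat.sub_zero]
  cases m with
  | zero =>
    rw [Fq_zero, stirling_succ_zero, stirling_succ_zero]
    simp
  | succ m =>
    rw [Fq_succ (p + 1) m, stirling_succ_succ (p + 1) m]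
    push_cast
    ring

/-- For `n ≥ 1` and `k ≥ 0`:
`B_{n,q}^{(-(k+1))} = (n+1) B_{n,q}^{(-k)} + ∑_{i=1}^{n-1} q^i C(n, i+1) B_{n-i,q}^{(-k)}`. -/
theorem polyBernoulliQ_rec (n k : ℕ) (hn : 1 ≤ n) :
    polyBernoulliQ n (k + 1)
      = ((n : Polynomial ℚ) + 1) * polyBernoulliQ n k
        + ∑ i ∈ Finset.Icc 1 (n - 1),
            (Polynomial.X : Polynomial ℚ) ^ i * (n.choose (i + 1) : Polynomial ℚ) *
              polyBernoulliQ (n - i) k := by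
  have h2 : ∑ i ∈ Finset.Icc 1 (n - 1),
        (Polynomial.X : Polynomial ℚ) ^ i * (n.choose (i + 1) : Polynomial ℚ) *
          polyBernoulliQ (n - i) k
      = ∑ m ∈ Finset.range (n + 1),
          Polynomial.C (((m : ℚ) - n) * stirling n m) *
            ((-Polynomial.X) ^ (n - m) * (m.factorial : Polynomial ℚ) *
              ((m : Polynomial ℚ) + 1) ^ k) := by
    have step1 : ∀ i ∈ Finset.Icc 1 (n - 1),
        (Polynomial.X : Polynomial ℚ) ^ i * (n.choose (i + 1) : Polynomial ℚ) *
          polyBernoulliQ (n - i) k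
        = ∑ m ∈ Finset.range (n + 1),
            Polynomial.C ((-1 : ℚ) ^ i * (n.choose (i + 1)) * stirling (n - i) m) *
              ((-Polynomial.X) ^ (n - m) * (m.factorial : Polynomial ℚ) *
                ((m : Polynomial ℚ) + 1) ^ k) := by
      intro i hi
      rw [Finset.mem_Icc] at hi
      unfold polyBernoulliQ
      rw [Finset.mul_sum]
      rw [Finset.sum_subset (Finset.range_subset_range.mpr (by omega : n - i + 1 ≤ n + 1))]
      · apply Finset.sum_congr rfl
        intro m hm
        rw [Finset.mem_range] at hm
        by_cases hmi : m ≤ n - i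
        · have hX : (Polynomial.X : Polynomial ℚ) ^ i * (-Polynomial.X) ^ (n - i - m)
              = Polynomial.C ((-1 : ℚ) ^ i) * (-Polynomial.X) ^ (n - m) := by
            rw [show n - m = (n - i - m) + i by omega, pow_add]
            rw [show Polynomial.C ((-1 : ℚ) ^ i) = (-1 : Polynomial ℚ) ^ i by
              simp [map_pow]]
            rw [show ((-1 : Polynomial ℚ) ^ i) * ((-Polynomial.X) ^ (n - i - m) *
                (-Polynomial.X) ^ i) = (-Polynomial.X) ^ (n - i - m) *
                  (((-1) * -Polynomial.X) ^ i) by rw [mul_pow]; ring]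
            ring_nf
          calc (Polynomial.X : Polynomial ℚ) ^ i * (n.choose (i + 1) : Polynomial ℚ) *
                ((stirling (n - i) m : Polynomial ℚ) * (-Polynomial.X) ^ (n - i - m) *
                  (m.factorial : Polynomial ℚ) * ((m : Polynomial ℚ) + 1) ^ k)
              = ((Polynomial.X : Polynomial ℚ) ^ i * (-Polynomial.X) ^ (n - i - m)) *
                  ((n.choose (i + 1) : Polynomial ℚ) * (stirling (n - i) m : Polynomial ℚ) *
                    (m.factorial : Polynomial ℚ) * ((m : Polynomial ℚ) + 1) ^ k) := by ring
            _ = _ := by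
                rw [hX]
                simp only [map_mul, map_pow, map_natCast, map_neg, map_one]
                ring
        · rw [stirling_eq_zero_of_lt (n - i) m (by omega)]
          simp
      · intro m _ hm
        rw [Finset.mem_range, not_lt] at hm
        rw [stirling_eq_zero_of_lt (n - i) m (by omega)]
        simp
    rw [Finset.sum_congr rfl step1, Finset.sum_comm]
    apply Finset.sum_congr rfl
    intro m _
    rw [← Finset.sum_mul, ← map_sum, key_identity n m hn]
  rw [h2]
  unfold polyBernoulliQ
  rw [Finset.mul_sum, ← Finset.sum_add_distrib]
  apply Finset.sum_congr rfl
  intro m hm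
  have hC : Polynomial.C (((m : ℚ) - n) * stirling n m)
      = ((m : Polynomial ℚ) - n) * (stirling n m : Polynomial ℚ) := by
    simp only [map_mul, map_sub, map_natCast]
  rw [hC]
  ring
end
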